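/- Let X be a mixing subshift of finite type, let Y ⊆ X be a subshift, and let g : Y → X be any continuous shift-commuting map. Then there exists a cellular automaton h : X → X with h|_Y = g. -/

import Mathlib

/-- The shift map on the full shift `A^ℤ`: `σ(x)_i = x_{i+1}`. -/
def shiftMap {A : Type*} (x : ℤ → A) : ℤ → A := fun i => x (i + 1)

/-- A cellular automaton on the full shift `A^ℤ` (with the product topology,
`A` discrete): a continuous map commuting with the shift. -/
def IsCA {A : Type*} [TopologicalSpace A] (f : (ℤ → A) → (ℤ → A)) : Prop :=
  Continuous f ∧ ∀ x, f (shiftMap x) = shiftMap (f x)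

/-- `f` is von Neumann regular in the monoid `End(A^ℤ)` of cellular automata:
there is a CA `h` with `f ∘ h ∘ f = f` and `h ∘ f ∘ h = h`. -/
def IsRegularCA {A : Type*} [TopologicalSpace A] (f : (ℤ → A) → (ℤ → A)) : Prop :=
  ∃ h : (ℤ → A) → (ℤ → A), IsCA h ∧ f ∘ h ∘ f = f ∧ h ∘ f ∘ h = h

/-- A subshift: a closed, shift-invariant subset of the full shift. -/
def IsSubshift {A : Type*} [TopologicalSpace A] (X : Set (ℤ → A)) : Prop :=
  IsClosed X ∧ shiftMap '' X = X

/-- The finite word `w` occurs as a subword of the bi-infinite sequence `x`. -/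
def occursIn {A : Type*} (w : List A) (x : ℤ → A) : Prop :=
  ∃ i : ℤ, ∀ k : Fin w.length, x (i + (k.val : ℤ)) = w.get k

/-- A subshift of finite type: the set of points avoiding a finite set `F` of
forbidden finite words. -/
def IsSFT {A : Type*} (X : Set (ℤ → A)) : Prop :=
  ∃ F : Set (List A), F.Finite ∧ X = {x | ∀ w ∈ F, ¬ occursIn w x}

/-- The language of a subshift: the finite words occurring in its points. -/
def lang {A : Type*} (X : Set (ℤ → A)) : Set (List A) :=
  {w | ∃ x ∈ X, occursIn w x}

/-- `X` is mixing: for all words `u, v` in the language of `X` there is `N` such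
that for every `n ≥ N` some word `u w v` with `|w| = n` is in the language. -/
def IsMixing {A : Type*} (X : Set (ℤ → A)) : Prop :=
  ∀ u ∈ lang X, ∀ v ∈ lang X, ∃ N : ℕ, ∀ n : ℕ, N ≤ n →
    ∃ w : List A, w.length = n ∧ (u ++ w ++ v) ∈ lang X

/-- A cellular automaton on the subshift `X`: a map `X → X` (presented as a map
of the ambient full shift restricted to `X`) that is continuous on `X` and
commutes with the shift on `X`. -/
def IsCAOn {A : Type*} [TopologicalSpace A] (X : Set (ℤ → A))
    (f : (ℤ → A) → (ℤ → A)) : Prop :=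
  Set.MapsTo f X X ∧ ContinuousOn f X ∧ ∀ x ∈ X, f (shiftMap x) = shiftMap (f x)

/-- `f` is von Neumann regular as an element of the monoid `End(X)` of cellular
automata on `X`: there is a CA `h` on `X` with `f∘h∘f = f` and `h∘f∘h = h` as
maps on `X`. -/
def IsRegularCAOn {A : Type*} [TopologicalSpace A] (X : Set (ℤ → A))
    (f : (ℤ → A) → (ℤ → A)) : Prop :=
  ∃ h : (ℤ → A) → (ℤ → A), IsCAOn X h ∧
    (∀ x ∈ X, f (h (f x)) = f x) ∧ (∀ x ∈ X, h (f (h x)) = h x)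

/-! ### Auxiliary development for the extension theorem -/

noncomputable section ExtAux
open Classical

/-- Shift by `n`. -/
def shiftBy {A : Type*} (n : ℤ) (x : ℤ → A) : ℤ → A := fun i => x (i + n)

lemma shiftBy_shiftBy {A : Type*} (a b : ℤ) (x : ℤ → A) :
    shiftBy a (shiftBy b x) = shiftBy (a + b) x := by
  funext i; simp [shiftBy]; ring_nf

lemma shiftMap_shiftBy {A : Type*} (n : ℤ) (x : ℤ → A) :
    shiftMap (shiftBy n x) = shiftBy (n + 1) x := by
  funext i; simp [shiftBy, shiftMap]; ring_nf

lemma shiftBy_one {A : Type*} (x : ℤ → A) : shiftBy 1 x = shiftMap x := rfl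

lemma shiftMap_injective {A : Type*} : Function.Injective (shiftMap (A := A)) := by
  intro x y hxy
  funext i
  have := congrFun hxy (i - 1)
  simpa [shiftMap] using this

/-- A subshift is invariant under all shifts. -/
lemma IsSubshift.shiftBy_mem {A : Type*} [TopologicalSpace A] {S : Set (ℤ → A)}
    (hS : IsSubshift S) {x : ℤ → A} (hx : x ∈ S) (n : ℤ) : shiftBy n x ∈ S := by
  induction n using Int.induction_on with
  | zero => convert hx using 1; funext i; simp [shiftBy]
  | succ k ih =>
      have : shiftMap (shiftBy k x) ∈ S := by
        rw [← hS.2]; exact Set.mem_image_of_mem _ ih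
      rwa [shiftMap_shiftBy] at this
  | pred k ih =>
      have h1 : shiftBy (-(k : ℤ)) x ∈ S := ih
      rw [← hS.2] at h1
      obtain ⟨w, hw, hweq⟩ := h1
      have : w = shiftBy (-(k : ℤ) - 1) x := by
        apply shiftMap_injective
        rw [hweq, shiftMap_shiftBy]
        congr 1; ring
      rwa [this] at hw


lemma mem_lang_of_agree {A : Type*} [TopologicalSpace A] {X : Set (ℤ → A)} {z : ℤ → A}
    (hz : z ∈ X) (w : List A) (c : ℤ)
    (hw : ∀ k : Fin w.length, w.get k = z (c + (k : ℕ))) : w ∈ lang X :=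
  ⟨z, hz, c, fun k => (hw k).symm⟩

lemma lang_elim {A : Type*} [TopologicalSpace A] {X : Set (ℤ → A)} {w : List A}
    (hw : w ∈ lang X) :
    ∃ z ∈ X, ∃ c : ℤ, ∀ k : Fin w.length, z (c + (k : ℕ)) = w.get k := by
  obtain ⟨z, hz, c, h⟩ := hw
  exact ⟨z, hz, c, h⟩

/-- All data needed for the construction of the extension CA. -/
structure ExtSetup (A : Type*) [TopologicalSpace A] where
  X : Set (ℤ → A)
  Y : Set (ℤ → A)
  g : (ℤ → A) → (ℤ → A)
  F : Set (List A)
  φ : (ℤ → A) → A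
  tw : List A → List A → List A
  r : ℕ
  m : ℕ
  N₀ : ℕ
  hm1 : 1 ≤ m
  hX : IsSubshift X
  hXF : X = {x | ∀ w ∈ F, ¬ occursIn w x}
  hFm : ∀ w ∈ F, w.length ≤ m + 1
  hY : IsSubshift Y
  hYX : Y ⊆ X
  hgX : ∀ y ∈ Y, g y ∈ X
  hφ : ∀ y ∈ Y, ∀ i : ℤ, g y i = φ (shiftBy i y)
  hφloc : ∀ x x' : ℤ → A, (∀ j : ℤ, -(r : ℤ) ≤ j → j ≤ r → x j = x' j) → φ x = φ x'
  htw_len : ∀ u v : List A, u ∈ lang X → v ∈ lang X → u.length = m → v.length = m →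
    (tw u v).length = N₀
  htw_mem : ∀ u v : List A, u ∈ lang X → v ∈ lang X → u.length = m → v.length = m →
    (u ++ tw u v ++ v) ∈ lang X
  hne : Nonempty A

namespace ExtSetup

variable {A : Type*} [TopologicalSpace A] (S : ExtSetup A)

/-- radius for `Y`-windows -/
def R : ℤ := S.m + S.r
/-- fattening parameter -/
def P : ℤ := S.N₀ + S.m

/-- `x` looks like a point of `Y` on `[i-R, i+R]`. -/
def U (x : ℤ → A) (i : ℤ) : Prop :=
  ∃ y ∈ S.Y, ∀ j : ℤ, i - S.R ≤ j → j ≤ i + S.R → y j = x j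

/-- `U` holds on `[i-P, i+P]`. -/
def V (x : ℤ → A) (i : ℤ) : Prop :=
  ∀ j : ℤ, i - S.P ≤ j → j ≤ i + S.P → S.U x j

/-- `i` lies in an interval of length `m` on which `V` holds. -/
def W (x : ℤ → A) (i : ℤ) : Prop :=
  ∃ a : ℤ, a ≤ i ∧ i < a + S.m ∧ ∀ j : ℤ, a ≤ j → j < a + S.m → S.V x j

/-- The local rule of `g`, applied at position `i`. -/
def ruleAt (x : ℤ → A) (i : ℤ) : A := S.φ (shiftBy i x)

/-- Tail of length `m` of the image of a run ending at `b`. -/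
def u1 (x : ℤ → A) (b : ℤ) : List A :=
  List.ofFn fun k : Fin S.m => S.ruleAt x (b + 1 - S.m + k)
/-- Word of `x` just after the left transition zone. -/
def v1 (x : ℤ → A) (b : ℤ) : List A :=
  List.ofFn fun k : Fin S.m => x (b + 1 + S.N₀ + k)
/-- Word of `x` just before the right transition zone. -/
def u2 (x : ℤ → A) (a : ℤ) : List A :=
  List.ofFn fun k : Fin S.m => x (a - S.N₀ - S.m + k)
/-- Head of length `m` of the image of a run starting at `a`. -/
def v2 (x : ℤ → A) (a : ℤ) : List A :=
  List.ofFn fun k : Fin S.m => S.ruleAt x (a + k)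

/-- The extension CA. -/
def h (x : ℤ → A) (i : ℤ) : A :=
  if S.W x i then S.ruleAt x i
  else if hL : ∃ d : ℕ, 1 ≤ d ∧ d ≤ S.N₀ ∧ S.W x (i - d) then
    (S.tw (S.u1 x (i - Nat.find hL)) (S.v1 x (i - Nat.find hL))).getD
      (Nat.find hL - 1) (x i)
  else if hR : ∃ d : ℕ, 1 ≤ d ∧ d ≤ S.N₀ ∧ S.W x (i + d) then
    (S.tw (S.u2 x (i + Nat.find hR)) (S.v2 x (i + Nat.find hR))).getD
      (S.N₀ - Nat.find hR) (x i)
  else x i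

section lemmas

variable {S} {x x' : ℤ → A} {i j b a : ℤ}

lemma W_V (hW : S.W x i) : S.V x i := by
  obtain ⟨a, ha1, ha2, ha3⟩ := hW
  exact ha3 i ha1 ha2

lemma V_U (hV : S.V x i) : S.U x i := by
  have hP : (0 : ℤ) ≤ S.P := by simp [ExtSetup.P]; positivity
  exact hV i (by omega) (by omega)

/-- If `W` holds at `b` but not at `b+1`, then `W` holds on all of `[b+1-m, b]`. -/
lemma W_interval_right (hb : S.W x b) (hb1 : ¬ S.W x (b + 1)) :
    ∀ j : ℤ, b + 1 - S.m ≤ j → j ≤ b → S.W x j := by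
  obtain ⟨a, ha1, ha2, ha3⟩ := hb
  have hae : a + S.m = b + 1 := by
    by_contra hne
    exact hb1 ⟨a, by omega, by omega, ha3⟩
  intro j hj1 hj2
  exact ⟨a, by omega, by omega, ha3⟩

/-- If `W` holds at `a` but not at `a-1`, then `W` holds on all of `[a, a+m-1]`. -/
lemma W_interval_left (ha : S.W x a) (ha1' : ¬ S.W x (a - 1)) :
    ∀ j : ℤ, a ≤ j → j < a + S.m → S.W x j := by
  obtain ⟨a0, ha1, ha2, ha3⟩ := ha
  have hae : a0 = a := by
    by_contra hne
    exact ha1' ⟨a0, by omega, by omega, ha3⟩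
  subst hae
  intro j hj1 hj2
  exact ⟨a0, by omega, by omega, ha3⟩

/-- Gaps of `W` to the right of a run have length at least `2P+1`. -/
lemma G1 (hb : S.W x b) (hb1 : ¬ S.W x (b + 1)) :
    ∀ k : ℤ, 1 ≤ k → k ≤ 2 * S.P + 1 → ¬ S.W x (b + k) := by
  have hVb : S.V x b := W_V hb
  have hnVb1 : ¬ S.V x (b + 1) := by
    intro hVb1
    apply hb1
    obtain ⟨a, ha1, ha2, ha3⟩ := hb
    have hae : a + S.m = b + 1 := by
      by_contra hne
      exact hb1 ⟨a, by omega, by omega, ha3⟩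
    refine ⟨a + 1, by omega, by omega, fun j hj1 hj2 => ?_⟩
    by_cases hje : j = a + S.m
    · rw [hje, hae]; exact hVb1
    · exact ha3 j (by omega) (by omega)
  have hnU : ¬ S.U x (b + S.P + 1) := by
    intro hU
    apply hnVb1
    intro j hj1 hj2
    by_cases hje : j = b + S.P + 1
    · rwa [hje]
    · exact hVb j (by omega) (by omega)
  intro k hk1 hk2 hW
  have hV := W_V hW
  exact hnU (hV (b + S.P + 1) (by omega) (by omega))

/-- Gaps of `W` to the left of a run have length at least `2P+1`. -/
lemma G2 (ha : S.W x a) (ha1 : ¬ S.W x (a - 1)) :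
    ∀ k : ℤ, 1 ≤ k → k ≤ 2 * S.P + 1 → ¬ S.W x (a - k) := by
  have hVa : S.V x a := W_V ha
  have hnVa1 : ¬ S.V x (a - 1) := by
    intro hVa1
    apply ha1
    obtain ⟨a0, h1, h2, h3⟩ := ha
    have hae : a0 = a := by
      by_contra hne
      exact ha1 ⟨a0, by omega, by omega, h3⟩
    subst hae
    refine ⟨a0 - 1, by omega, by omega, fun j hj1 hj2 => ?_⟩
    by_cases hje : j = a0 - 1
    · rwa [hje]
    · exact h3 j (by omega) (by omega)
  have hnU : ¬ S.U x (a - S.P - 1) := by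
    intro hU
    apply hnVa1
    intro j hj1 hj2
    by_cases hje : j = a - S.P - 1
    · rwa [hje]
    · exact hVa j (by omega) (by omega)
  intro k hk1 hk2 hW
  have hV := W_V hW
  exact hnU (hV (a - S.P - 1) (by omega) (by omega))

lemma h_rule (hW : S.W x i) : S.h x i = S.ruleAt x i := by
  rw [ExtSetup.h, if_pos hW]

lemma h_transL (hb : S.W x b) (hb1 : ¬ S.W x (b + 1)) (d : ℕ) (hd1 : 1 ≤ d)
    (hd2 : d ≤ S.N₀) :
    S.h x (b + d) = (S.tw (S.u1 x b) (S.v1 x b)).getD (d - 1) (x (b + d)) := by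
  have hP : S.P = (S.N₀ : ℤ) + S.m := rfl
  have hnW : ¬ S.W x (b + (d : ℤ)) := G1 hb hb1 d (by exact_mod_cast hd1) (by omega)
  have heq : b + (d : ℤ) - d = b := by ring
  have hL : ∃ d' : ℕ, 1 ≤ d' ∧ d' ≤ S.N₀ ∧ S.W x (b + (d : ℤ) - d') :=
    ⟨d, hd1, hd2, by rwa [heq]⟩
  have hfind : Nat.find hL = d := by
    rw [Nat.find_eq_iff]
    refine ⟨⟨hd1, hd2, by rwa [heq]⟩, ?_⟩
    rintro k hk ⟨hk1, hk2, hkW⟩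
    have e : b + (d : ℤ) - k = b + ((d : ℤ) - k) := by ring
    rw [e] at hkW
    exact G1 hb hb1 _ (by omega) (by omega) hkW
  simp only [ExtSetup.h, if_neg hnW, dif_pos hL, hfind, heq]

lemma h_copy_afterL (hb : S.W x b) (hb1 : ¬ S.W x (b + 1)) (d : ℕ)
    (hd1 : S.N₀ + 1 ≤ d) (hd2 : d ≤ S.N₀ + S.m) :
    S.h x (b + d) = x (b + d) := by
  have hP : S.P = (S.N₀ : ℤ) + S.m := rfl
  have hnW : ¬ S.W x (b + (d : ℤ)) := G1 hb hb1 d (by omega) (by omega)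
  have hnL : ¬ ∃ d' : ℕ, 1 ≤ d' ∧ d' ≤ S.N₀ ∧ S.W x (b + (d : ℤ) - d') := by
    rintro ⟨d', h1, h2, hW⟩
    have e : b + (d : ℤ) - d' = b + ((d : ℤ) - d') := by ring
    rw [e] at hW
    exact G1 hb hb1 _ (by omega) (by omega) hW
  have hnR : ¬ ∃ d' : ℕ, 1 ≤ d' ∧ d' ≤ S.N₀ ∧ S.W x (b + (d : ℤ) + d') := by
    rintro ⟨d', h1, h2, hW⟩
    have e : b + (d : ℤ) + d' = b + ((d : ℤ) + d') := by ring
    rw [e] at hW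
    exact G1 hb hb1 _ (by omega) (by omega) hW
  simp only [ExtSetup.h, if_neg hnW, dif_neg hnL, dif_neg hnR]

lemma h_transR (ha : S.W x a) (ha1 : ¬ S.W x (a - 1)) (d : ℕ) (hd1 : 1 ≤ d)
    (hd2 : d ≤ S.N₀) :
    S.h x (a - d) = (S.tw (S.u2 x a) (S.v2 x a)).getD (S.N₀ - d) (x (a - d)) := by
  have hP : S.P = (S.N₀ : ℤ) + S.m := rfl
  have hnW : ¬ S.W x (a - (d : ℤ)) := G2 ha ha1 d (by exact_mod_cast hd1) (by omega)
  have heq : a - (d : ℤ) + d = a := by ring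
  have hnL : ¬ ∃ d' : ℕ, 1 ≤ d' ∧ d' ≤ S.N₀ ∧ S.W x (a - (d : ℤ) - d') := by
    rintro ⟨d', h1, h2, hW⟩
    have e : a - (d : ℤ) - d' = a - ((d : ℤ) + d') := by ring
    rw [e] at hW
    exact G2 ha ha1 _ (by omega) (by omega) hW
  have hR : ∃ d' : ℕ, 1 ≤ d' ∧ d' ≤ S.N₀ ∧ S.W x (a - (d : ℤ) + d') :=
    ⟨d, hd1, hd2, by rwa [heq]⟩
  have hfind : Nat.find hR = d := by
    rw [Nat.find_eq_iff]
    refine ⟨⟨hd1, hd2, by rwa [heq]⟩, ?_⟩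
    rintro k hk ⟨hk1, hk2, hkW⟩
    have e : a - (d : ℤ) + k = a - ((d : ℤ) - k) := by ring
    rw [e] at hkW
    exact G2 ha ha1 _ (by omega) (by omega) hkW
  simp only [ExtSetup.h, if_neg hnW, dif_neg hnL, dif_pos hR, hfind, heq]

lemma h_copy_beforeR (ha : S.W x a) (ha1 : ¬ S.W x (a - 1)) (d : ℕ)
    (hd1 : S.N₀ + 1 ≤ d) (hd2 : d ≤ S.N₀ + S.m) :
    S.h x (a - d) = x (a - d) := by
  have hP : S.P = (S.N₀ : ℤ) + S.m := rfl
  have hnW : ¬ S.W x (a - (d : ℤ)) := G2 ha ha1 d (by omega) (by omega)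
  have hnL : ¬ ∃ d' : ℕ, 1 ≤ d' ∧ d' ≤ S.N₀ ∧ S.W x (a - (d : ℤ) - d') := by
    rintro ⟨d', h1, h2, hW⟩
    have e : a - (d : ℤ) - d' = a - ((d : ℤ) + d') := by ring
    rw [e] at hW
    exact G2 ha ha1 _ (by omega) (by omega) hW
  have hnR : ¬ ∃ d' : ℕ, 1 ≤ d' ∧ d' ≤ S.N₀ ∧ S.W x (a - (d : ℤ) + d') := by
    rintro ⟨d', h1, h2, hW⟩
    have e : a - (d : ℤ) + d' = a - ((d : ℤ) - d') := by ring
    rw [e] at hW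
    exact G2 ha ha1 _ (by omega) (by omega) hW
  simp only [ExtSetup.h, if_neg hnW, dif_neg hnL, dif_neg hnR]

lemma h_copy_far (hno : ∀ p : ℤ, i - S.N₀ ≤ p → p ≤ i + S.N₀ → ¬ S.W x p) :
    S.h x i = x i := by
  have hnW : ¬ S.W x i := hno i (by omega) (by omega)
  have hnL : ¬ ∃ d' : ℕ, 1 ≤ d' ∧ d' ≤ S.N₀ ∧ S.W x (i - d') := by
    rintro ⟨d', h1, h2, hW⟩
    exact hno (i - d') (by omega) (by omega) hW
  have hnR : ¬ ∃ d' : ℕ, 1 ≤ d' ∧ d' ≤ S.N₀ ∧ S.W x (i + d') := by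
    rintro ⟨d', h1, h2, hW⟩
    exact hno (i + d') (by omega) (by omega) hW
  simp only [ExtSetup.h, if_neg hnW, dif_neg hnL, dif_neg hnR]

lemma u1_length : (S.u1 x b).length = S.m := by simp [ExtSetup.u1]
lemma v1_length : (S.v1 x b).length = S.m := by simp [ExtSetup.v1]
lemma u2_length : (S.u2 x a).length = S.m := by simp [ExtSetup.u2]
lemma v2_length : (S.v2 x a).length = S.m := by simp [ExtSetup.v2]

/-- On `Y`-looking regions, the rule output matches an actual point of `X`. -/
lemma ruleCover (hU : S.U x i) :
    ∃ z ∈ S.X, ∀ j : ℤ, i - S.m ≤ j → j ≤ i + S.m → S.ruleAt x j = z j := by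
  obtain ⟨y, hy, hagree⟩ := hU
  have hR : S.R = (S.m : ℤ) + S.r := rfl
  refine ⟨S.g y, S.hgX y hy, fun j hj1 hj2 => ?_⟩
  have h2 : S.φ (shiftBy j x) = S.φ (shiftBy j y) := by
    apply S.hφloc
    intro l hl1 hl2
    exact (hagree (l + j) (by omega) (by omega)).symm
  rw [ExtSetup.ruleAt, h2, ← S.hφ y hy j]

lemma u1_mem (hU : S.U x b) : S.u1 x b ∈ lang S.X := by
  obtain ⟨z, hz, hagree⟩ := ruleCover hU
  apply mem_lang_of_agree hz _ (b + 1 - S.m)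
  intro k
  have hk : (k : ℕ) < S.m := by
    have := k.isLt; simpa [ExtSetup.u1] using this
  simp only [ExtSetup.u1, List.get_eq_getElem, List.getElem_ofFn, Fin.coe_cast]
  exact (List.get_ofFn _ _).trans (hagree (b + 1 - S.m + (k : ℕ)) (by omega) (by omega))

lemma v1_mem (hx : x ∈ S.X) : S.v1 x b ∈ lang S.X := by
  apply mem_lang_of_agree hx _ (b + 1 + S.N₀)
  intro k
  simp only [ExtSetup.v1, List.get_eq_getElem, List.getElem_ofFn, Fin.coe_cast]
  exact List.get_ofFn _ _

lemma u2_mem (hx : x ∈ S.X) : S.u2 x a ∈ lang S.X := by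
  apply mem_lang_of_agree hx _ (a - S.N₀ - S.m)
  intro k
  simp only [ExtSetup.u2, List.get_eq_getElem, List.getElem_ofFn, Fin.coe_cast]
  exact List.get_ofFn _ _

lemma v2_mem (hU : S.U x a) : S.v2 x a ∈ lang S.X := by
  obtain ⟨z, hz, hagree⟩ := ruleCover hU
  apply mem_lang_of_agree hz _ a
  intro k
  have hk : (k : ℕ) < S.m := by
    have := k.isLt; simpa [ExtSetup.v2] using this
  simp only [ExtSetup.v2, List.get_eq_getElem, List.getElem_ofFn, Fin.coe_cast]
  exact (List.get_ofFn _ _).trans (hagree (a + (k : ℕ)) (by omega) (by omega))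

/-- Transfer agreement on a long interval to any length-`m+1` window inside it. -/
lemma window_of_agree {z : ℤ → A} {c s : ℤ} {L : ℕ} (hz : z ∈ S.X)
    (hagree : ∀ k : ℕ, k < L → S.h x (s + k) = z (c + k)) (j : ℤ)
    (h1 : s ≤ j) (h2 : j + S.m < s + L) :
    ∃ z' ∈ S.X, ∃ c' : ℤ, ∀ k : ℕ, k ≤ S.m → S.h x (j + k) = z' (c' + k) := by
  refine ⟨z, hz, c + (j - s), fun k hk => ?_⟩
  have hm0 : (0:ℤ) ≤ (S.m : ℤ) := by positivity
  have hk' : ((j - s).toNat + k) < L := by omega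
  have h3 := hagree ((j - s).toNat + k) hk'
  have e1 : s + (((j - s).toNat + k : ℕ) : ℤ) = j + k := by push_cast; omega
  have e2 : c + (((j - s).toNat + k : ℕ) : ℤ) = c + (j - s) + k := by push_cast; omega
  rw [e1, e2] at h3
  exact h3

/-- Claim 1: pure rule windows. -/
lemma agree_rule (j : ℤ) (hW : ∀ k : ℕ, k ≤ S.m → S.W x (j + k)) :
    ∃ z ∈ S.X, ∀ k : ℕ, k < S.m + 1 → S.h x (j + k) = z (j + k) := by
  have hU : S.U x j := V_U (W_V (by simpa using hW 0 (by omega)))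
  obtain ⟨z, hz, hagree⟩ := ruleCover hU
  refine ⟨z, hz, fun k hk => ?_⟩
  rw [h_rule (hW k (by omega))]
  exact hagree (j + k) (by omega) (by omega)

/-- Claim 2: windows near the right end of a run. -/
lemma claim2 (hx : x ∈ S.X) (hb : S.W x b) (hb1 : ¬ S.W x (b + 1)) :
    ∃ z ∈ S.X, ∃ c : ℤ, ∀ k : ℕ, k < 2 * S.m + S.N₀ →
      S.h x ((b + 1 - S.m) + k) = z (c + k) := by
  have hUb : S.U x b := V_U (W_V hb)
  have hu_mem := u1_mem (x := x) (b := b) hUb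
  have hv_mem := v1_mem (x := x) (b := b) hx
  have hu_len : (S.u1 x b).length = S.m := u1_length
  have hv_len : (S.v1 x b).length = S.m := v1_length
  have ht_len : (S.tw (S.u1 x b) (S.v1 x b)).length = S.N₀ :=
    S.htw_len _ _ hu_mem hv_mem hu_len hv_len
  have hΩ : (S.u1 x b ++ S.tw (S.u1 x b) (S.v1 x b) ++ S.v1 x b) ∈ lang S.X :=
    S.htw_mem _ _ hu_mem hv_mem hu_len hv_len
  obtain ⟨z, hz, c, hzΩ⟩ := lang_elim hΩ
  have hlen : (S.u1 x b ++ S.tw (S.u1 x b) (S.v1 x b) ++ S.v1 x b).length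
      = 2 * S.m + S.N₀ := by
    simp [hu_len, hv_len, ht_len]; omega
  refine ⟨z, hz, c, fun k hk => ?_⟩
  have hk' : k < (S.u1 x b ++ S.tw (S.u1 x b) (S.v1 x b) ++ S.v1 x b).length := by omega
  have hΩk := hzΩ ⟨k, hk'⟩
  simp only [List.get_eq_getElem] at hΩk
  rw [hΩk]
  rcases lt_or_ge k S.m with hk1 | hk1
  · -- rule zone
    have hWk : S.W x (b + 1 - S.m + k) := W_interval_right hb hb1 _ (by omega) (by omega)
    rw [h_rule hWk]
    rw [List.getElem_append_left (by simp [hu_len, ht_len]; omega),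
        List.getElem_append_left (by omega)]
    simp only [ExtSetup.u1, List.getElem_ofFn]
  · rcases lt_or_ge k (S.m + S.N₀) with hk2 | hk2
    · -- transition zone
      have ht := h_transL hb hb1 (k - S.m + 1) (by omega) (by omega)
      have e : b + ((k - S.m + 1 : ℕ) : ℤ) = b + 1 - S.m + k := by push_cast; omega
      rw [e] at ht
      rw [ht, List.getD_eq_getElem _ _ (by omega)]
      rw [List.getElem_append_left (by simp [hu_len, ht_len]; omega),
          List.getElem_append_right (by omega)]
      congr 1
      omega
    · -- copy zone
      have ht := h_copy_afterL hb hb1 (k - S.m + 1) (by omega) (by omega)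
      have e : b + ((k - S.m + 1 : ℕ) : ℤ) = b + 1 - S.m + k := by push_cast; omega
      rw [e] at ht
      rw [ht, List.getElem_append_right (by simp [hu_len, ht_len]; omega)]
      simp only [List.length_append, hu_len, ht_len]
      simp only [ExtSetup.v1, List.getElem_ofFn]
      congr 1
      omega

/-- Claim 3: windows near the left end of a run. -/
lemma claim3 (hx : x ∈ S.X) (ha : S.W x a) (ha1 : ¬ S.W x (a - 1)) :
    ∃ z ∈ S.X, ∃ c : ℤ, ∀ k : ℕ, k < 2 * S.m + S.N₀ →
      S.h x ((a - S.N₀ - S.m) + k) = z (c + k) := by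
  have hUa : S.U x a := V_U (W_V ha)
  have hu_mem := u2_mem (x := x) (a := a) hx
  have hv_mem := v2_mem (x := x) (a := a) hUa
  have hu_len : (S.u2 x a).length = S.m := u2_length
  have hv_len : (S.v2 x a).length = S.m := v2_length
  have ht_len : (S.tw (S.u2 x a) (S.v2 x a)).length = S.N₀ :=
    S.htw_len _ _ hu_mem hv_mem hu_len hv_len
  have hΩ : (S.u2 x a ++ S.tw (S.u2 x a) (S.v2 x a) ++ S.v2 x a) ∈ lang S.X :=
    S.htw_mem _ _ hu_mem hv_mem hu_len hv_len
  obtain ⟨z, hz, c, hzΩ⟩ := lang_elim hΩ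
  refine ⟨z, hz, c, fun k hk => ?_⟩
  have hk' : k < (S.u2 x a ++ S.tw (S.u2 x a) (S.v2 x a) ++ S.v2 x a).length := by
    simp [hu_len, hv_len, ht_len]; omega
  have hΩk := hzΩ ⟨k, hk'⟩
  simp only [List.get_eq_getElem] at hΩk
  rw [hΩk]
  rcases lt_or_ge k S.m with hk1 | hk1
  · -- copy zone
    have ht := h_copy_beforeR ha ha1 (S.N₀ + S.m - k) (by omega) (by omega)
    have e : a - ((S.N₀ + S.m - k : ℕ) : ℤ) = a - S.N₀ - S.m + k := by push_cast; omega
    rw [e] at ht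
    rw [ht, List.getElem_append_left (by simp [hu_len, ht_len]; omega),
        List.getElem_append_left (by omega)]
    simp only [ExtSetup.u2, List.getElem_ofFn]
  · rcases lt_or_ge k (S.m + S.N₀) with hk2 | hk2
    · -- transition zone
      have ht := h_transR ha ha1 (S.m + S.N₀ - k) (by omega) (by omega)
      have e : a - ((S.m + S.N₀ - k : ℕ) : ℤ) = a - S.N₀ - S.m + k := by push_cast; omega
      rw [e] at ht
      rw [ht, List.getD_eq_getElem _ _ (by omega)]
      rw [List.getElem_append_left (by simp [hu_len, ht_len]; omega),
          List.getElem_append_right (by omega)]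
      congr 1
      omega
    · -- rule zone
      have hWk : S.W x (a - S.N₀ - S.m + k) := by
        apply W_interval_left ha ha1 _ (by omega) (by omega)
      rw [h_rule hWk]
      rw [List.getElem_append_right (by simp [hu_len, ht_len]; omega)]
      simp only [List.length_append, hu_len, ht_len]
      simp only [ExtSetup.v2, List.getElem_ofFn]
      congr 1
      omega

lemma exists_bdryR_aux : ∀ n : ℕ, ∀ p : ℤ, S.W x p → ¬ S.W x (p + n + 1) →
    ∃ b : ℤ, p ≤ b ∧ b ≤ p + n ∧ S.W x b ∧ ¬ S.W x (b + 1) := by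
  intro n
  induction n with
  | zero => exact fun p hp hq => ⟨p, le_rfl, by omega, hp, by simpa using hq⟩
  | succ n ih =>
      intro p hp hq
      by_cases hc : S.W x (p + n + 1)
      · refine ⟨p + n + 1, by omega, by omega, hc, ?_⟩
        have e : p + (n : ℤ) + 1 + 1 = p + ((n : ℕ) + 1 : ℕ) + 1 := by push_cast; ring
        rwa [e]
      · obtain ⟨b, h1, h2, h3, h4⟩ := ih p hp hc
        exact ⟨b, h1, by omega, h3, h4⟩

lemma exists_bdryR {p q : ℤ} (hpq : p ≤ q) (hp : S.W x p) (hq : ¬ S.W x q) :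
    ∃ b : ℤ, p ≤ b ∧ b < q ∧ S.W x b ∧ ¬ S.W x (b + 1) := by
  have hne : p ≠ q := by rintro rfl; exact hq hp
  have hq' : ¬ S.W x (p + ((q - p - 1).toNat : ℤ) + 1) := by
    have e : p + ((q - p - 1).toNat : ℤ) + 1 = q := by omega
    rwa [e]
  obtain ⟨b, h1, h2, h3, h4⟩ := exists_bdryR_aux (q - p - 1).toNat p hp hq'
  exact ⟨b, h1, by omega, h3, h4⟩

lemma exists_bdryL_aux : ∀ n : ℕ, ∀ p : ℤ, ¬ S.W x p → S.W x (p + n + 1) →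
    ∃ a : ℤ, p < a ∧ a ≤ p + n + 1 ∧ S.W x a ∧ ¬ S.W x (a - 1) := by
  intro n
  induction n with
  | zero =>
      intro p hp hq
      exact ⟨p + 1, by omega, by omega, by simpa using hq, by simpa using hp⟩
  | succ n ih =>
      intro p hp hq
      by_cases hc : S.W x (p + 1)
      · exact ⟨p + 1, by omega, by omega, hc, by simpa using hp⟩
      · have hq' : S.W x ((p + 1) + n + 1) := by
          have e : (p + 1) + (n : ℤ) + 1 = p + ((n : ℕ) + 1 : ℕ) + 1 := by push_cast; ring
          rwa [e]
        obtain ⟨a, h1, h2, h3, h4⟩ := ih (p + 1) hc hq'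
        exact ⟨a, by omega, by omega, h3, h4⟩

lemma exists_bdryL {p q : ℤ} (hpq : p ≤ q) (hp : ¬ S.W x p) (hq : S.W x q) :
    ∃ a : ℤ, p < a ∧ a ≤ q ∧ S.W x a ∧ ¬ S.W x (a - 1) := by
  have hne : p ≠ q := by rintro rfl; exact hp hq
  have hq' : S.W x (p + ((q - p - 1).toNat : ℤ) + 1) := by
    have e : p + ((q - p - 1).toNat : ℤ) + 1 = q := by omega
    rwa [e]
  obtain ⟨a, h1, h2, h3, h4⟩ := exists_bdryL_aux (q - p - 1).toNat p hp hq'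
  exact ⟨a, h1, by omega, h3, h4⟩

/-- Every length-`m+1` window of `h x` matches a point of `X`. -/
lemma window_covered (hx : x ∈ S.X) (j : ℤ) :
    ∃ z ∈ S.X, ∃ c : ℤ, ∀ k : ℕ, k ≤ S.m → S.h x (j + k) = z (c + k) := by
  have hm0 : (0:ℤ) ≤ (S.m : ℤ) := by positivity
  by_cases hall : ∀ k : ℕ, k ≤ S.m → S.W x (j + k)
  · obtain ⟨z, hz, hag⟩ := agree_rule j hall
    exact window_of_agree (c := j) (s := j) (L := S.m + 1) hz hag j le_rfl (by omega)
  · push_neg at hall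
    obtain ⟨k₀, hk₀, hnW⟩ := hall
    by_cases hsome : ∃ p : ℤ, j ≤ p ∧ p ≤ j + S.m ∧ S.W x p
    · obtain ⟨p, hp1, hp2, hpW⟩ := hsome
      rcases le_or_gt p (j + (k₀ : ℤ)) with hpq | hpq
      · obtain ⟨b, hb1, hb2, hbW, hbn⟩ := exists_bdryR hpq hpW hnW
        obtain ⟨z, hz, c, hag⟩ := claim2 hx hbW hbn
        exact window_of_agree hz hag j (by omega) (by push_cast; omega)
      · obtain ⟨a, ha1, ha2, haW, han⟩ := exists_bdryL (le_of_lt hpq) hnW hpW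
        obtain ⟨z, hz, c, hag⟩ := claim3 hx haW han
        exact window_of_agree hz hag j (by omega) (by push_cast; omega)
    · push_neg at hsome
      have hnWj : ¬ S.W x j := by
        have := hsome j le_rfl (by omega)
        exact this
      by_cases hL2 : ∃ p : ℤ, j - S.N₀ ≤ p ∧ p ≤ j - 1 ∧ S.W x p
      · obtain ⟨p, hp1, hp2, hpW⟩ := hL2
        obtain ⟨b, hb1, hb2, hbW, hbn⟩ := exists_bdryR (by omega) hpW hnWj
        obtain ⟨z, hz, c, hag⟩ := claim2 hx hbW hbn
        exact window_of_agree hz hag j (by omega) (by push_cast; omega)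
      · by_cases hR2 : ∃ p : ℤ, j + S.m + 1 ≤ p ∧ p ≤ j + S.m + S.N₀ ∧ S.W x p
        · obtain ⟨p, hp1, hp2, hpW⟩ := hR2
          have hnWm : ¬ S.W x (j + S.m) := hsome (j + S.m) (by omega) le_rfl
          obtain ⟨a, ha1, ha2, haW, han⟩ := exists_bdryL (by omega) hnWm hpW
          obtain ⟨z, hz, c, hag⟩ := claim3 hx haW han
          exact window_of_agree hz hag j (by omega) (by push_cast; omega)
        · push_neg at hL2 hR2
          refine ⟨x, hx, j, fun k hk => ?_⟩
          apply h_copy_far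
          intro p hq1 hq2 hpW
          rcases le_or_gt p (j - 1) with hc1 | hc1
          · exact hL2 p (by omega) hc1 hpW
          · rcases le_or_gt p (j + S.m) with hc2 | hc2
            · exact hsome p (by omega) hc2 hpW
            · exact hR2 p (by omega) (by omega) hpW

lemma W_of_memY (hx : x ∈ S.Y) (i : ℤ) : S.W x i := by
  have hm := S.hm1
  exact ⟨i, le_rfl, by omega, fun j _ _ => fun j' _ _ => ⟨x, hx, fun _ _ _ => rfl⟩⟩

lemma h_eq_on_Y (hx : x ∈ S.Y) : S.h x = S.g x := by
  funext i
  rw [h_rule (W_of_memY hx i), ExtSetup.ruleAt, ← S.hφ x hx i]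

lemma h_mapsTo : Set.MapsTo S.h S.X S.X := by
  intro x hx
  rw [S.hXF]
  intro w hw hocc
  obtain ⟨i₀, hocc⟩ := hocc
  obtain ⟨z, hz, c, hzw⟩ := window_covered hx i₀
  rw [S.hXF] at hz
  apply hz w hw
  refine ⟨c, fun k => ?_⟩
  have hk : (k : ℕ) ≤ S.m := by
    have h1 := k.isLt
    have h2 := S.hFm w hw
    omega
  rw [← hocc k]
  exact (hzw k hk).symm


/-- Master congruence lemma for `h`. -/
lemma h_congr {x x' : ℤ → A} {i i' : ℤ}
    (hW : ∀ t : ℤ, -(S.N₀ : ℤ) ≤ t → t ≤ S.N₀ → (S.W x (i + t) ↔ S.W x' (i' + t)))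
    (hrule : S.ruleAt x i = S.ruleAt x' i')
    (hu1 : ∀ d : ℕ, 1 ≤ d → d ≤ S.N₀ →
      S.u1 x (i - d) = S.u1 x' (i' - d) ∧ S.v1 x (i - d) = S.v1 x' (i' - d))
    (hu2 : ∀ d : ℕ, 1 ≤ d → d ≤ S.N₀ →
      S.u2 x (i + d) = S.u2 x' (i' + d) ∧ S.v2 x (i + d) = S.v2 x' (i' + d))
    (hxx : x i = x' i') :
    S.h x i = S.h x' i' := by
  have hW0 : S.W x i ↔ S.W x' i' := by
    have := hW 0 (by omega) (by omega)
    simpa using this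
  have hLiff : ∀ n : ℕ, (1 ≤ n ∧ n ≤ S.N₀ ∧ S.W x (i - n)) ↔
      (1 ≤ n ∧ n ≤ S.N₀ ∧ S.W x' (i' - n)) := by
    intro n
    constructor <;> rintro ⟨h1, h2, h3⟩ <;> refine ⟨h1, h2, ?_⟩
    · have e : i - (n : ℤ) = i + (-(n : ℤ)) := by ring
      have e' : i' - (n : ℤ) = i' + (-(n : ℤ)) := by ring
      rw [e'] ; rw [e] at h3
      exact (hW (-(n : ℤ)) (by omega) (by omega)).mp h3
    · have e : i - (n : ℤ) = i + (-(n : ℤ)) := by ring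
      have e' : i' - (n : ℤ) = i' + (-(n : ℤ)) := by ring
      rw [e] ; rw [e'] at h3
      exact (hW (-(n : ℤ)) (by omega) (by omega)).mpr h3
  have hRiff : ∀ n : ℕ, (1 ≤ n ∧ n ≤ S.N₀ ∧ S.W x (i + n)) ↔
      (1 ≤ n ∧ n ≤ S.N₀ ∧ S.W x' (i' + n)) := by
    intro n
    constructor <;> rintro ⟨h1, h2, h3⟩ <;>
      exact ⟨h1, h2, by
        first
        | exact (hW (n : ℤ) (by omega) (by omega)).mp h3
        | exact (hW (n : ℤ) (by omega) (by omega)).mpr h3⟩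
  by_cases hc1 : S.W x i
  · rw [ExtSetup.h, ExtSetup.h, if_pos hc1, if_pos (hW0.mp hc1), hrule]
  · have hc1' : ¬ S.W x' i' := fun hh => hc1 (hW0.mpr hh)
    by_cases hc2 : ∃ d : ℕ, 1 ≤ d ∧ d ≤ S.N₀ ∧ S.W x (i - d)
    · have hc2' : ∃ d : ℕ, 1 ≤ d ∧ d ≤ S.N₀ ∧ S.W x' (i' - d) := by
        obtain ⟨d, h1, h2, h3⟩ := hc2
        exact ⟨d, (hLiff d).mp ⟨h1, h2, h3⟩⟩
      rw [ExtSetup.h, ExtSetup.h, if_neg hc1, if_neg hc1', dif_pos hc2, dif_pos hc2']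
      have hfe : Nat.find hc2 = Nat.find hc2' :=
        le_antisymm (Nat.find_mono fun n hn => (hLiff n).mpr hn)
          (Nat.find_mono fun n hn => (hLiff n).mp hn)
      obtain ⟨h1, h2, _⟩ := Nat.find_spec hc2
      obtain ⟨heq1, heq2⟩ := hu1 (Nat.find hc2) h1 h2
      rw [← hfe, heq1, heq2, hxx]
    · have hc2' : ¬ ∃ d : ℕ, 1 ≤ d ∧ d ≤ S.N₀ ∧ S.W x' (i' - d) := by
        rintro ⟨d, hd⟩
        exact hc2 ⟨d, (hLiff d).mpr hd⟩
      by_cases hc3 : ∃ d : ℕ, 1 ≤ d ∧ d ≤ S.N₀ ∧ S.W x (i + d)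
      · have hc3' : ∃ d : ℕ, 1 ≤ d ∧ d ≤ S.N₀ ∧ S.W x' (i' + d) := by
          obtain ⟨d, h1, h2, h3⟩ := hc3
          exact ⟨d, (hRiff d).mp ⟨h1, h2, h3⟩⟩
        rw [ExtSetup.h, ExtSetup.h, if_neg hc1, if_neg hc1', dif_neg hc2, dif_neg hc2',
          dif_pos hc3, dif_pos hc3']
        have hfe : Nat.find hc3 = Nat.find hc3' :=
          le_antisymm (Nat.find_mono fun n hn => (hRiff n).mpr hn)
            (Nat.find_mono fun n hn => (hRiff n).mp hn)
        obtain ⟨h1, h2, _⟩ := Nat.find_spec hc3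
        obtain ⟨heq1, heq2⟩ := hu2 (Nat.find hc3) h1 h2
        rw [← hfe, heq1, heq2, hxx]
      · have hc3' : ¬ ∃ d : ℕ, 1 ≤ d ∧ d ≤ S.N₀ ∧ S.W x' (i' + d) := by
          rintro ⟨d, hd⟩
          exact hc3 ⟨d, (hRiff d).mpr hd⟩
        rw [ExtSetup.h, ExtSetup.h, if_neg hc1, if_neg hc1', dif_neg hc2, dif_neg hc2',
          dif_neg hc3, dif_neg hc3']
        exact hxx

lemma U_shift : S.U (shiftMap x) i ↔ S.U x (i + 1) := by
  constructor
  · rintro ⟨y, hy, hag⟩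
    refine ⟨shiftBy (-1) y, S.hY.shiftBy_mem hy (-1), fun j h1 h2 => ?_⟩
    have := hag (j - 1) (by omega) (by omega)
    simpa [shiftBy, shiftMap, ← sub_eq_add_neg] using this
  · rintro ⟨y, hy, hag⟩
    refine ⟨shiftBy 1 y, S.hY.shiftBy_mem hy 1, fun j h1 h2 => ?_⟩
    have := hag (j + 1) (by omega) (by omega)
    simpa [shiftBy, shiftMap] using this

lemma V_shift : S.V (shiftMap x) i ↔ S.V x (i + 1) := by
  constructor
  · intro hV j h1 h2
    have := (U_shift (x := x) (i := j - 1)).mp (hV (j - 1) (by omega) (by omega))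
    simpa using this
  · intro hV j h1 h2
    exact (U_shift (x := x) (i := j)).mpr (hV (j + 1) (by omega) (by omega))

lemma W_shift : S.W (shiftMap x) i ↔ S.W x (i + 1) := by
  constructor
  · rintro ⟨a, h1, h2, h3⟩
    refine ⟨a + 1, by omega, by omega, fun j hj1 hj2 => ?_⟩
    have := (V_shift (x := x) (i := j - 1)).mp (h3 (j - 1) (by omega) (by omega))
    simpa using this
  · rintro ⟨a, h1, h2, h3⟩
    refine ⟨a - 1, by omega, by omega, fun j hj1 hj2 => ?_⟩
    exact (V_shift (x := x) (i := j)).mpr (h3 (j + 1) (by omega) (by omega))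

lemma ruleAt_shift : S.ruleAt (shiftMap x) i = S.ruleAt x (i + 1) := by
  rw [ExtSetup.ruleAt, ExtSetup.ruleAt, ← shiftBy_one, shiftBy_shiftBy]

lemma u1_shift : S.u1 (shiftMap x) b = S.u1 x (b + 1) := by
  simp only [ExtSetup.u1]
  congr 1
  funext k
  rw [ruleAt_shift]
  congr 1
  ring

lemma v1_shift : S.v1 (shiftMap x) b = S.v1 x (b + 1) := by
  simp only [ExtSetup.v1, shiftMap]
  congr 1
  funext k
  congr 1
  ring

lemma u2_shift : S.u2 (shiftMap x) a = S.u2 x (a + 1) := by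
  simp only [ExtSetup.u2, shiftMap]
  congr 1
  funext k
  congr 1
  ring

lemma v2_shift : S.v2 (shiftMap x) a = S.v2 x (a + 1) := by
  simp only [ExtSetup.v2]
  congr 1
  funext k
  rw [ruleAt_shift]
  congr 1
  ring

lemma h_shift : S.h (shiftMap x) i = S.h x (i + 1) := by
  apply h_congr
  · intro t _ _
    rw [W_shift]
    have e : i + t + 1 = i + 1 + t := by ring
    rw [e]
  · exact ruleAt_shift
  · intro d h1 h2
    constructor
    · rw [u1_shift]; congr 1; ring
    · rw [v1_shift]; congr 1; ring
  · intro d h1 h2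
    constructor
    · rw [u2_shift]; congr 1; ring
    · rw [v2_shift]; congr 1; ring
  · rfl

lemma U_local (hag : ∀ j : ℤ, i - S.R ≤ j → j ≤ i + S.R → x j = x' j) :
    S.U x i ↔ S.U x' i := by
  constructor <;> rintro ⟨y, hy, h⟩ <;> refine ⟨y, hy, fun j h1 h2 => ?_⟩
  · rw [h j h1 h2]; exact hag j h1 h2
  · rw [h j h1 h2, hag j h1 h2]

lemma V_local (hag : ∀ j : ℤ, i - (S.P + S.R) ≤ j → j ≤ i + (S.P + S.R) → x j = x' j) :
    S.V x i ↔ S.V x' i := by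
  constructor <;> intro hV j h1 h2
  · exact (U_local fun l l1 l2 => hag l (by omega) (by omega)).mp (hV j h1 h2)
  · exact (U_local fun l l1 l2 => hag l (by omega) (by omega)).mpr (hV j h1 h2)

lemma W_local
    (hag : ∀ j : ℤ, i - (S.m + S.P + S.R) ≤ j → j ≤ i + (S.m + S.P + S.R) → x j = x' j) :
    S.W x i ↔ S.W x' i := by
  constructor <;> rintro ⟨a, h1, h2, h3⟩ <;> refine ⟨a, h1, h2, fun j hj1 hj2 => ?_⟩
  · exact (V_local fun l l1 l2 => hag l (by omega) (by omega)).mp (h3 j hj1 hj2)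
  · exact (V_local fun l l1 l2 => hag l (by omega) (by omega)).mpr (h3 j hj1 hj2)

lemma ruleAt_local (hag : ∀ j : ℤ, i - S.r ≤ j → j ≤ i + S.r → x j = x' j) :
    S.ruleAt x i = S.ruleAt x' i := by
  apply S.hφloc
  intro l hl1 hl2
  simp only [shiftBy]
  exact hag (l + i) (by omega) (by omega)

/-- Radius of locality for `h`. -/
def Krad : ℤ := S.m + S.P + S.R + S.N₀ + S.m + S.r + 1

lemma h_local (hag : ∀ j : ℤ, i - S.Krad ≤ j → j ≤ i + S.Krad → x j = x' j) :
    S.h x i = S.h x' i := by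
  have hK : S.Krad = (S.m : ℤ) + S.P + S.R + S.N₀ + S.m + S.r + 1 := rfl
  have hP0 : (0:ℤ) ≤ S.P := by
    have : S.P = (S.N₀ : ℤ) + S.m := rfl
    omega
  have hR0 : (0:ℤ) ≤ S.R := by
    have : S.R = (S.m : ℤ) + S.r := rfl
    omega
  apply h_congr
  · intro t h1 h2
    exact W_local fun l l1 l2 => hag l (by omega) (by omega)
  · exact ruleAt_local fun l l1 l2 => hag l (by omega) (by omega)
  · intro d hd1 hd2
    constructor
    · simp only [ExtSetup.u1]
      congr 1
      funext k
      have hk : (k : ℕ) < S.m := k.isLt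
      exact ruleAt_local fun l l1 l2 => hag l (by omega) (by omega)
    · simp only [ExtSetup.v1]
      congr 1
      funext k
      have hk : (k : ℕ) < S.m := k.isLt
      exact hag _ (by omega) (by omega)
  · intro d hd1 hd2
    constructor
    · simp only [ExtSetup.u2]
      congr 1
      funext k
      have hk : (k : ℕ) < S.m := k.isLt
      exact hag _ (by omega) (by omega)
    · simp only [ExtSetup.v2]
      congr 1
      funext k
      have hk : (k : ℕ) < S.m := k.isLt
      exact ruleAt_local fun l l1 l2 => hag l (by omega) (by omega)
  · exact hag i (by omega) (by omega)

lemma h_continuous [DiscreteTopology A] : Continuous S.h := by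
  apply continuous_pi
  intro i
  haveI : Nonempty A := S.hne
  classical
  set t : Finset ℤ := Finset.Icc (i - S.Krad) (i + S.Krad) with ht
  have hfac : (fun x : ℤ → A => S.h x i) =
      (fun w : t → A => S.h (fun j => if hj : j ∈ t then w ⟨j, hj⟩
        else Classical.arbitrary A) i) ∘ (fun x (j : t) => x (j : ℤ)) := by
    funext x
    simp only [Function.comp]
    apply h_local
    intro j h1 h2
    have hj : j ∈ t := by rw [ht]; simp; omega
    simp [hj]
  rw [hfac]
  apply Continuous.comp
  · exact continuous_of_discreteTopology
  · exact continuous_pi fun j => continuous_apply _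

end lemmas

/-- The main theorem, packaged form. -/
theorem main [DiscreteTopology A] (S : ExtSetup A) :
    IsCAOn S.X S.h ∧ ∀ x ∈ S.Y, S.h x = S.g x := by
  refine ⟨⟨h_mapsTo, (h_continuous (S := S)).continuousOn, fun x _ => ?_⟩,
    fun x hx => h_eq_on_Y hx⟩
  funext i
  exact h_shift


end ExtSetup

/-- `g` commutes with all shifts on `Y`. -/
lemma g_shiftBy {A : Type*} [TopologicalSpace A] {Y : Set (ℤ → A)} (hY : IsSubshift Y)
    {g : (ℤ → A) → (ℤ → A)} (hg3 : ∀ x ∈ Y, g (shiftMap x) = shiftMap (g x)) :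
    ∀ n : ℤ, ∀ y ∈ Y, g (shiftBy n y) = shiftBy n (g y) := by
  intro n
  induction n using Int.induction_on with
  | zero =>
      intro y hy
      have e : ∀ z : ℤ → A, shiftBy 0 z = z := fun z => funext fun i => by simp [shiftBy]
      rw [e, e]
  | succ k ih =>
      intro y hy
      rw [← shiftMap_shiftBy, hg3 _ (hY.shiftBy_mem hy k), ih y hy, shiftMap_shiftBy]
  | pred k ih =>
      intro y hy
      have e : (-(k : ℤ) - 1) + 1 = -(k : ℤ) := by ring
      have h1 : shiftMap (shiftBy (-(k : ℤ) - 1) y) = shiftBy (-(k : ℤ)) y := by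
        rw [shiftMap_shiftBy, e]
      have h2 := hg3 _ (hY.shiftBy_mem hy (-(k : ℤ) - 1))
      rw [h1, ih y hy] at h2
      apply shiftMap_injective
      rw [shiftMap_shiftBy, e, ← h2]

/-- Uniform radius for the dependence of `(g y) 0` on `y`. -/
lemma exists_uniform_radius {A : Type*} [Finite A] [TopologicalSpace A] [DiscreteTopology A]
    {Y : Set (ℤ → A)} (hYc : IsClosed Y) {g : (ℤ → A) → (ℤ → A)}
    (hg2 : ContinuousOn g Y) :
    ∃ r : ℕ, ∀ y ∈ Y, ∀ y' ∈ Y,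
      (∀ j : ℤ, -(r : ℤ) ≤ j → j ≤ r → y j = y' j) → g y 0 = g y' 0 := by
  classical
  have hYcomp : IsCompact Y := hYc.isCompact
  have key : ∀ i : {y // y ∈ Y}, ∃ I : Finset ℤ,
      ∀ z ∈ Y, (∀ a ∈ I, z a = i.1 a) → g z 0 = g i.1 0 := by
    rintro ⟨y, hy⟩
    have hcw : ContinuousWithinAt (fun z => g z 0) Y y :=
      ((continuous_apply (0 : ℤ)).comp_continuousOn hg2) y hy
    have hmem : (fun z => g z 0) ⁻¹' {g y 0} ∈ nhdsWithin y Y :=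
      hcw ((isOpen_discrete _).mem_nhds rfl)
    rw [mem_nhdsWithin] at hmem
    obtain ⟨O, hOopen, hyO, hOsub⟩ := hmem
    obtain ⟨I, u, hIu, hsub⟩ := isOpen_pi_iff.mp hOopen y hyO
    refine ⟨I, fun z hz hza => ?_⟩
    have hzO : z ∈ O := hsub fun a ha => by
      rw [hza a ha]
      exact (hIu a ha).2
    exact hOsub ⟨hzO, hz⟩
  choose I hI using key
  have hopen : ∀ i, IsOpen {z : ℤ → A | ∀ a ∈ I i, z a = i.1 a} := by
    intro i
    have : {z : ℤ → A | ∀ a ∈ I i, z a = i.1 a}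
        = Set.pi (↑(I i)) (fun a => {i.1 a}) := by
      ext z; simp [Set.mem_pi]
    rw [this]
    exact isOpen_set_pi (I i).finite_toSet (fun a _ => isOpen_discrete _)
  have hcover : Y ⊆ ⋃ i : {y // y ∈ Y}, {z : ℤ → A | ∀ a ∈ I i, z a = i.1 a} :=
    fun y hy => Set.mem_iUnion.mpr ⟨⟨y, hy⟩, fun a _ => rfl⟩
  obtain ⟨s, hs⟩ := hYcomp.elim_finite_subcover _ hopen hcover
  refine ⟨s.sup (fun i => (I i).sup Int.natAbs), ?_⟩
  intro y hy y' hy' hagree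
  obtain ⟨i, his, hyU⟩ := Set.mem_iUnion₂.mp (hs hy)
  have hyU' : ∀ a ∈ I i, y a = i.1 a := hyU
  have hy'U : ∀ a ∈ I i, y' a = i.1 a := by
    intro a ha
    have hr : a.natAbs ≤ s.sup (fun i => (I i).sup Int.natAbs) :=
      le_trans (Finset.le_sup (f := Int.natAbs) ha)
        (Finset.le_sup (f := fun i => (I i).sup Int.natAbs) his)
    rw [← hyU' a ha]
    exact (hagree a (by omega) (by omega)).symm
  exact (hI i y hy hyU').trans (hI i y' hy' hy'U).symm

/-- Curtis–Hedlund–Lyndon: `g` is given by a local rule. -/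
lemma exists_local_rule {A : Type*} [Finite A] [TopologicalSpace A] [DiscreteTopology A]
    {Y : Set (ℤ → A)} (hY : IsSubshift Y) {g : (ℤ → A) → (ℤ → A)}
    (hg2 : ContinuousOn g Y) (hg3 : ∀ x ∈ Y, g (shiftMap x) = shiftMap (g x))
    (hA : Nonempty A) :
    ∃ r : ℕ, ∃ φ : (ℤ → A) → A,
      (∀ x x' : ℤ → A, (∀ j : ℤ, -(r : ℤ) ≤ j → j ≤ r → x j = x' j) → φ x = φ x') ∧
      (∀ y ∈ Y, ∀ i : ℤ, g y i = φ (shiftBy i y)) := by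
  classical
  obtain ⟨r, hr⟩ := exists_uniform_radius hY.1 hg2
  have hgs := g_shiftBy hY hg3
  refine ⟨r, fun x => if hx : ∃ y ∈ Y, ∀ j : ℤ, -(r : ℤ) ≤ j → j ≤ r → y j = x j
    then g hx.choose 0 else Classical.arbitrary A, ?_, ?_⟩
  · intro x x' hag
    by_cases h1 : ∃ y ∈ Y, ∀ j : ℤ, -(r : ℤ) ≤ j → j ≤ r → y j = x j
    · have h2 : ∃ y ∈ Y, ∀ j : ℤ, -(r : ℤ) ≤ j → j ≤ r → y j = x' j :=
        ⟨h1.choose, h1.choose_spec.1,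
          fun j a b => (h1.choose_spec.2 j a b).trans (hag j a b)⟩
      beta_reduce
      rw [dif_pos h1, dif_pos h2]
      exact hr _ h1.choose_spec.1 _ h2.choose_spec.1
        (fun j a b => by rw [h1.choose_spec.2 j a b, hag j a b, ← h2.choose_spec.2 j a b])
    · have h2 : ¬ ∃ y ∈ Y, ∀ j : ℤ, -(r : ℤ) ≤ j → j ≤ r → y j = x' j := by
        rintro ⟨y, hy, hagy⟩
        exact h1 ⟨y, hy, fun j a b => (hagy j a b).trans (hag j a b).symm⟩
      beta_reduce
      rw [dif_neg h1, dif_neg h2]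
  · intro y hy i
    have hx : ∃ y' ∈ Y, ∀ j : ℤ, -(r : ℤ) ≤ j → j ≤ r → y' j = shiftBy i y j :=
      ⟨shiftBy i y, hY.shiftBy_mem hy i, fun _ _ _ => rfl⟩
    beta_reduce
    rw [dif_pos hx]
    have h1 := hr _ hx.choose_spec.1 _ (hY.shiftBy_mem hy i)
      (fun j a b => hx.choose_spec.2 j a b)
    rw [h1, hgs i y hy]
    simp [shiftBy]

end ExtAux

/-- Let `X` be a mixing SFT, `Y ⊆ X` a subshift, and `g : Y → X` continuous and
shift-commuting. Then `g` extends to a cellular automaton `h : X → X`. -/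
theorem stmt2 {A : Type*} [Finite A] [TopologicalSpace A] [DiscreteTopology A]
    (X Y : Set (ℤ → A)) (hX : IsSubshift X) (hXsft : IsSFT X) (hXmix : IsMixing X)
    (hY : IsSubshift Y) (hYX : Y ⊆ X)
    (g : (ℤ → A) → (ℤ → A)) (hg1 : Set.MapsTo g Y X) (hg2 : ContinuousOn g Y)
    (hg3 : ∀ x ∈ Y, g (shiftMap x) = shiftMap (g x)) :
    ∃ h : (ℤ → A) → (ℤ → A), IsCAOn X h ∧ ∀ x ∈ Y, h x = g x := by
  classical
  by_cases hYne : Y.Nonempty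
  · obtain ⟨y₀, hy₀⟩ := hYne
    have hA : Nonempty A := ⟨y₀ 0⟩
    obtain ⟨F, hFfin, hXFeq⟩ := hXsft
    obtain ⟨mb, hmb⟩ : ∃ mb : ℕ, ∀ w ∈ F, w.length ≤ mb := by
      obtain ⟨b, hb⟩ := (hFfin.image List.length).bddAbove
      exact ⟨b, fun w hw => hb (Set.mem_image_of_mem _ hw)⟩
    set m : ℕ := max mb 1 with hm
    obtain ⟨r, φ, hφloc, hφ⟩ := exists_local_rule hY hg2 hg3 hA
    have hfin : {w : List A | w ∈ lang X ∧ w.length = m}.Finite :=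
      (List.finite_length_eq (α := A) m).subset (fun w hw => hw.2)
    have hNf : ∀ u v : List A, ∃ N : ℕ, (u ∈ lang X → v ∈ lang X → ∀ n : ℕ, N ≤ n →
        ∃ w : List A, w.length = n ∧ (u ++ w ++ v) ∈ lang X) := by
      intro u v
      by_cases hu : u ∈ lang X
      · by_cases hv : v ∈ lang X
        · obtain ⟨N, hN⟩ := hXmix u hu v hv
          exact ⟨N, fun _ _ => hN⟩
        · exact ⟨0, fun _ hv' => absurd hv' hv⟩
      · exact ⟨0, fun hu' => absurd hu' hu⟩
    choose Nf hNfs using hNf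
    set T := hfin.toFinset ×ˢ hfin.toFinset with hT
    set N₀ : ℕ := T.sup (fun p => Nf p.1 p.2) with hN₀def
    have hN₀ : ∀ u v : List A, u ∈ lang X → v ∈ lang X → u.length = m → v.length = m →
        Nf u v ≤ N₀ := by
      intro u v hu hv hlu hlv
      have hmem : (u, v) ∈ T := Finset.mem_product.mpr
        ⟨hfin.mem_toFinset.mpr ⟨hu, hlu⟩, hfin.mem_toFinset.mpr ⟨hv, hlv⟩⟩
      exact Finset.le_sup (f := fun p => Nf p.1 p.2) hmem
    have htw0 : ∀ u v : List A, ∃ w : List A,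
        (u ∈ lang X → v ∈ lang X → u.length = m → v.length = m →
          (w.length = N₀ ∧ (u ++ w ++ v) ∈ lang X)) := by
      intro u v
      by_cases hc : u ∈ lang X ∧ v ∈ lang X ∧ u.length = m ∧ v.length = m
      · obtain ⟨w, hw1, hw2⟩ := hNfs u v hc.1 hc.2.1 N₀
          (hN₀ u v hc.1 hc.2.1 hc.2.2.1 hc.2.2.2)
        exact ⟨w, fun _ _ _ _ => ⟨hw1, hw2⟩⟩
      · exact ⟨[], fun h1 h2 h3 h4 => absurd ⟨h1, h2, h3, h4⟩ hc⟩
    choose tw htw using htw0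
    let S : ExtSetup A :=
      { X := X, Y := Y, g := g, F := F, φ := φ, tw := tw, r := r, m := m, N₀ := N₀
        hm1 := le_max_right _ _
        hX := hX, hXF := hXFeq
        hFm := fun w hw => le_trans (hmb w hw) (le_trans (le_max_left _ _) (Nat.le_succ m))
        hY := hY, hYX := hYX
        hgX := fun y hy => hg1 hy
        hφ := hφ, hφloc := hφloc
        htw_len := fun u v hu hv hlu hlv => (htw u v hu hv hlu hlv).1
        htw_mem := fun u v hu hv hlu hlv => (htw u v hu hv hlu hlv).2
        hne := hA }
    obtain ⟨hCA, hExt⟩ := ExtSetup.main S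
    exact ⟨S.h, hCA, fun x hx => hExt x hx⟩
  · refine ⟨id, ⟨fun x hx => hx, continuousOn_id, fun x _ => rfl⟩,
      fun x hx => (hYne ⟨x, hx⟩).elim⟩
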